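/- Let φ : ℝⁿ × [0,∞) → ℝⁿ satisfy the semigroup (flow) property φ(x, s+t) = φ(φ(x,s), t) for all x ∈ ℝⁿ and all s, t ≥ 0, let α : [0,∞) → [0,∞) be continuous, fix x ∈ ℝⁿ, and suppose t ↦ α(‖φ(x,t)‖) is continuous and integrable on [0,∞). Define V(y) = ∫₀^∞ α(‖φ(y,t)‖) dt. Then the function s ↦ V(φ(x,s)) is differentiable on (0,∞) with derivative equal to −α(‖φ(x,s)‖); in particular its derivative is ≤ 0. -/

import Mathlib

open MeasureTheory

/-- Differentiability of the converse Lyapunov function along trajectories: with the flow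
property and `V(y) = ∫₀^∞ α(‖φ(y,t)‖) dt`, the map `s ↦ V(φ(x,s))` is differentiable on
`(0,∞)` with derivative `−α(‖φ(x,s)‖) ≤ 0`. -/
theorem converse_lyapunov_hasDerivAt {n : ℕ}
    (φ : (Fin n → ℝ) → ℝ → (Fin n → ℝ))
    (hflow : ∀ (x : Fin n → ℝ) (s t : ℝ), 0 ≤ s → 0 ≤ t → φ x (s + t) = φ (φ x s) t)
    (α : ℝ → ℝ)
    (hα_cont : ContinuousOn α (Set.Ici 0))
    (hα_nonneg : ∀ z, 0 ≤ z → 0 ≤ α z)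
    (x : Fin n → ℝ)
    (hcont : ContinuousOn (fun t => α ‖φ x t‖) (Set.Ici 0))
    (hint : IntegrableOn (fun t => α ‖φ x t‖) (Set.Ici 0)) :
    ∀ s : ℝ, 0 < s →
      HasDerivAt (fun s' => ∫ t in Set.Ici (0 : ℝ), α ‖φ (φ x s') t‖) (-(α ‖φ x s‖)) s ∧
        -(α ‖φ x s‖) ≤ 0 := by
  intro s hs
  set g : ℝ → ℝ := fun t => α ‖φ x t‖ with hg
  set C : ℝ := ∫ t in Set.Ici (0 : ℝ), g t with hC
  -- key rewriting : for s' ≥ 0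
  have key : ∀ s' : ℝ, 0 ≤ s' →
      (∫ t in Set.Ici (0 : ℝ), α ‖φ (φ x s') t‖) = C - ∫ t in (0 : ℝ)..s', g t := by
    intro s' hs'
    have h1 : (∫ t in Set.Ici (0 : ℝ), α ‖φ (φ x s') t‖)
        = ∫ t in Set.Ici (0 : ℝ), g (s' + t) := by
      apply setIntegral_congr_fun measurableSet_Ici
      intro t ht
      simp only [hg]
      rw [hflow x s' t hs' ht]
    have h2 : (∫ t in Set.Ici (0 : ℝ), g (s' + t)) = ∫ t in Set.Ici s', g t := by
      rw [← integral_indicator measurableSet_Ici, ← integral_indicator measurableSet_Ici]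
      rw [← integral_add_right_eq_self (Set.indicator (Set.Ici s') g) s']
      congr 1
      ext t
      simp only [Set.indicator_apply, Set.mem_Ici]
      have hiff : (s' ≤ t + s') ↔ (0 ≤ t) := ⟨fun h => by linarith, fun h => by linarith⟩
      by_cases ht : 0 ≤ t
      · rw [if_pos ht, if_pos (hiff.mpr ht), add_comm]
      · rw [if_neg ht, if_neg (fun h => ht (hiff.mp h))]
    have h3 : C = (∫ t in Set.Ico (0 : ℝ) s', g t) + ∫ t in Set.Ici s', g t := by
      rw [hC, ← setIntegral_union]
      · congr 1
        rw [Set.Ico_union_Ici_eq_Ici hs']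
      · rw [Set.disjoint_left]
        intro a ha hb
        exact absurd (Set.mem_Ici.mp hb) (not_le.mpr ha.2)
      · exact measurableSet_Ici
      · exact hint.mono_set (Set.Ico_subset_Ici_self)
      · exact hint.mono_set (Set.Ici_subset_Ici.mpr hs')
    have h4 : (∫ t in Set.Ico (0 : ℝ) s', g t) = ∫ t in (0 : ℝ)..s', g t := by
      rw [intervalIntegral.integral_of_le hs', integral_Ico_eq_integral_Ioo, integral_Ioc_eq_integral_Ioo]
    rw [h1, h2]
    rw [h3, h4]; ring
  have hg_cont : ContinuousAt g s :=
    hcont.continuousAt (Ici_mem_nhds hs)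
  have hg_int : IntervalIntegrable g volume 0 s := by
    apply MeasureTheory.IntegrableOn.intervalIntegrable
    apply hint.mono_set
    rw [Set.uIcc_of_le hs.le]
    exact Set.Icc_subset_Ici_self
  have hderiv : HasDerivAt (fun s' => C - ∫ t in (0 : ℝ)..s', g t) (-(g s)) s := by
    have hF : HasDerivAt (fun s' => ∫ t in (0 : ℝ)..s', g t) (g s) s := by
      apply intervalIntegral.integral_hasDerivAt_right
      · exact hg_int
      · exact (hcont.mono Set.Ioi_subset_Ici_self).stronglyMeasurableAtFilter isOpen_Ioi s hs
      · exact hg_cont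
    exact ((hasDerivAt_const s C).sub hF).congr_deriv (zero_sub _)
  constructor
  · apply hderiv.congr_of_eventuallyEq
    filter_upwards [eventually_gt_nhds hs] with s' hs'
    exact key s' hs'.le
  · simpa using hα_nonneg _ (norm_nonneg _)
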